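/- Let R ∈ ℝ^{d×N} with R ≠ 0 and let λ > 0. Then the matrix M = RᵀR + λ‖R‖₂²·I is positive definite, 1ᵀM⁻¹1 > 0, and the vector c^λ = M⁻¹1 / (1ᵀM⁻¹1) satisfies ‖c^λ‖₂ ≤ (1/√N)·√(1 + 1/λ). -/

import Mathlib

open Matrix Polynomial

noncomputable def vecNorm {n : ℕ} (v : Fin n → ℝ) : ℝ := Real.sqrt (∑ i, v i ^ 2)

/-- Spectral norm of a rectangular real matrix. -/
noncomputable def specNorm {m n : ℕ} (A : Matrix (Fin m) (Fin n) ℝ) : ℝ :=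
  sSup ((fun v => vecNorm (A.mulVec v)) '' {v | vecNorm v ≤ 1})

lemma vecNorm_eq' {n : ℕ} (v : Fin n → ℝ) :
    vecNorm v = ‖(WithLp.equiv 2 (Fin n → ℝ)).symm v‖ := by
  rw [EuclideanSpace.norm_eq, vecNorm]
  congr 1
  refine Finset.sum_congr rfl fun i _ => ?_
  rw [Real.norm_eq_abs, sq_abs]
  rfl

noncomputable def euCLM {m n : ℕ} (A : Matrix (Fin m) (Fin n) ℝ) :
    EuclideanSpace ℝ (Fin n) →L[ℝ] EuclideanSpace ℝ (Fin m) :=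
  LinearMap.toContinuousLinearMap (Matrix.toEuclideanLin A)

lemma euCLM_apply {m n : ℕ} (A : Matrix (Fin m) (Fin n) ℝ) (v : Fin n → ℝ) :
    euCLM A ((WithLp.equiv 2 (Fin n → ℝ)).symm v)
      = (WithLp.equiv 2 (Fin m → ℝ)).symm (A.mulVec v) := rfl

lemma specNorm_eq {m n : ℕ} (A : Matrix (Fin m) (Fin n) ℝ) :
    specNorm A = ‖euCLM A‖ := by
  rw [← ContinuousLinearMap.sSup_unitClosedBall_eq_norm (euCLM A), specNorm]
  congr 1
  ext x
  constructor
  · rintro ⟨v, hv, rfl⟩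
    exact ⟨(WithLp.equiv 2 (Fin n → ℝ)).symm v,
      by rw [Metric.mem_closedBall, dist_zero_right, ← vecNorm_eq']; exact hv,
      by show ‖euCLM A ((WithLp.equiv 2 (Fin n → ℝ)).symm v)‖ = vecNorm (A.mulVec v)
         rw [euCLM_apply, ← vecNorm_eq']⟩
  · rintro ⟨v, hv, rfl⟩
    refine ⟨WithLp.equiv 2 (Fin n → ℝ) v, ?_, ?_⟩
    · simpa [vecNorm_eq', Metric.mem_closedBall] using hv
    · show vecNorm (A.mulVec (WithLp.equiv 2 (Fin n → ℝ) v)) = ‖euCLM A v‖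
      rw [vecNorm_eq']; rfl

lemma specNorm_pos {m n : ℕ} {A : Matrix (Fin m) (Fin n) ℝ} (hA : A ≠ 0) :
    0 < specNorm A := by
  rw [specNorm_eq]
  refine norm_pos_iff.mpr fun h => hA ?_
  have h0 : Matrix.toEuclideanLin A = 0 :=
    LinearMap.ext fun v => show euCLM A v = 0 by rw [h]; rfl
  exact (LinearEquiv.map_eq_zero_iff _).mp h0

lemma mulVec_vecNorm_le {m n : ℕ} (A : Matrix (Fin m) (Fin n) ℝ) (v : Fin n → ℝ) :
    vecNorm (A.mulVec v) ≤ specNorm A * vecNorm v := by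
  rw [specNorm_eq, vecNorm_eq' v, vecNorm_eq' (A.mulVec v), ← euCLM_apply]
  exact (euCLM A).le_opNorm _

lemma vecNorm_nonneg {n : ℕ} (v : Fin n → ℝ) : 0 ≤ vecNorm v := Real.sqrt_nonneg _

lemma dot_self_eq_sum_sq {n : ℕ} (v : Fin n → ℝ) : v ⬝ᵥ v = ∑ i, v i ^ 2 := by
  simp [dotProduct, sq]

lemma dot_self_nonneg {n : ℕ} (v : Fin n → ℝ) : 0 ≤ v ⬝ᵥ v := by
  rw [dot_self_eq_sum_sq]
  exact Finset.sum_nonneg fun i _ => sq_nonneg _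

lemma dot_self_pos {n : ℕ} {v : Fin n → ℝ} (hv : v ≠ 0) : 0 < v ⬝ᵥ v := by
  rw [dot_self_eq_sum_sq]
  obtain ⟨i, hi⟩ := Function.ne_iff.mp hv
  exact Finset.sum_pos' (fun j _ => sq_nonneg _)
    ⟨i, Finset.mem_univ i, (sq_nonneg _).lt_of_ne (Ne.symm (pow_ne_zero 2 hi))⟩

lemma vecNorm_sq {n : ℕ} (v : Fin n → ℝ) : vecNorm v ^ 2 = v ⬝ᵥ v := by
  rw [vecNorm, Real.sq_sqrt (Finset.sum_nonneg fun i _ => sq_nonneg _),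
    dot_self_eq_sum_sq]

lemma vecNorm_eq_sqrt_dot {n : ℕ} (v : Fin n → ℝ) :
    vecNorm v = Real.sqrt (v ⬝ᵥ v) := by
  rw [vecNorm, dot_self_eq_sum_sq]

/-- for `R ≠ 0` and `λ > 0`, the matrix `M = RᵀR + λ‖R‖₂²I` is positive definite,
`1ᵀM⁻¹1 > 0`, and the RNA weights `c^λ = M⁻¹1/(1ᵀM⁻¹1)` satisfy
`‖c^λ‖₂ ≤ (1/√N)·√(1+1/λ)`. -/
theorem rna_weights_norm_bound
    (d N : ℕ) (R : Matrix (Fin d) (Fin N) ℝ) (hR : R ≠ 0) (lam : ℝ) (hlam : 0 < lam) :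
    (Rᵀ * R + (lam * specNorm R ^ 2) • (1 : Matrix (Fin N) (Fin N) ℝ)).PosDef ∧
    0 < ∑ j, (Rᵀ * R + (lam * specNorm R ^ 2) • (1 : Matrix (Fin N) (Fin N) ℝ))⁻¹.mulVec
        (fun _ => (1 : ℝ)) j ∧
    vecNorm ((∑ j, (Rᵀ * R + (lam * specNorm R ^ 2) • (1 : Matrix (Fin N) (Fin N) ℝ))⁻¹.mulVec
        (fun _ => (1 : ℝ)) j)⁻¹ •
      (Rᵀ * R + (lam * specNorm R ^ 2) • (1 : Matrix (Fin N) (Fin N) ℝ))⁻¹.mulVec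
        (fun _ => (1 : ℝ))) ≤
      (1 / Real.sqrt N) * Real.sqrt (1 + 1 / lam) := by
  have hK : 0 < specNorm R ^ 2 := pow_pos (specNorm_pos hR) 2
  set s : ℝ := lam * specNorm R ^ 2 with hsdef
  have hs : 0 < s := mul_pos hlam hK
  set M : Matrix (Fin N) (Fin N) ℝ := Rᵀ * R + s • (1 : Matrix (Fin N) (Fin N) ℝ) with hMdef
  have hN : 0 < N := by
    rcases Nat.eq_zero_or_pos N with h | h
    · subst h; exact absurd (Matrix.ext fun i j => j.elim0) hR
    · exact h
  have hNR : (0 : ℝ) < N := Nat.cast_pos.mpr hN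
  -- quadratic form identity
  have quad : ∀ x : Fin N → ℝ, x ⬝ᵥ M *ᵥ x = (R *ᵥ x) ⬝ᵥ (R *ᵥ x) + s * (x ⬝ᵥ x) := by
    intro x
    rw [hMdef, Matrix.add_mulVec, dotProduct_add, Matrix.smul_mulVec,
      Matrix.one_mulVec, dotProduct_smul, smul_eq_mul, ← Matrix.mulVec_mulVec,
      Matrix.dotProduct_mulVec]
    congr 2
    exact Matrix.vecMul_transpose R x
  have herm : M.IsHermitian := by
    refine (Matrix.isHermitian_conjTranspose_mul_self R).add ?_
    show (s • (1 : Matrix (Fin N) (Fin N) ℝ))ᴴ = _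
    simp
  have hsymm : Mᵀ = M := by
    ext i j
    have := congrFun (congrFun herm i) j
    simpa [Matrix.conjTranspose_apply] using this
  have hstar : ∀ x : Fin N → ℝ, star x = x := fun x => funext fun i => rfl
  have hpd : M.PosDef := by
    refine Matrix.PosDef.of_dotProduct_mulVec_pos herm fun x hx => ?_
    rw [hstar, quad x]
    exact add_pos_of_nonneg_of_pos (dot_self_nonneg _) (mul_pos hs (dot_self_pos hx))
  refine ⟨hpd, ?_⟩
  set ones : Fin N → ℝ := fun _ => (1 : ℝ) with honesdef
  have honesnz : ones ≠ 0 := by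
    intro h
    have := congrFun h ⟨0, hN⟩
    simp [honesdef] at this
  set w : Fin N → ℝ := M⁻¹ *ᵥ ones with hwdef
  have hdet : IsUnit M.det := hpd.det_pos.ne'.isUnit
  have hMinv : M * M⁻¹ = 1 := Matrix.mul_nonsing_inv M hdet
  have hMw : M *ᵥ w = ones := by
    rw [hwdef, Matrix.mulVec_mulVec, hMinv, Matrix.one_mulVec]
  have ht : 0 < ones ⬝ᵥ w := by
    have := hpd.inv.dotProduct_mulVec_pos honesnz
    rwa [hstar] at this
  set t : ℝ := ones ⬝ᵥ w with htdef
  have hsum : ∑ j, w j = t := by simp [htdef, dotProduct, honesdef]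
  rw [hsum]
  refine ⟨ht, ?_⟩
  set c : Fin N → ℝ := t⁻¹ • w with hcdef
  have hMc : M *ᵥ c = t⁻¹ • ones := by rw [hcdef, Matrix.mulVec_smul, hMw]
  have hcMc : c ⬝ᵥ M *ᵥ c = t⁻¹ := by
    rw [hMc, dotProduct_smul, hcdef, smul_dotProduct, smul_eq_mul,
      smul_eq_mul, dotProduct_comm w ones, ← htdef]
    field_simp
  have swap : ∀ x y : Fin N → ℝ, x ⬝ᵥ M *ᵥ y = y ⬝ᵥ M *ᵥ x := by
    intro x y
    rw [Matrix.dotProduct_mulVec]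
    have hxv : x ᵥ* M = M *ᵥ x := by
      conv_lhs => rw [← hsymm, Matrix.vecMul_transpose]
    rw [hxv, dotProduct_comm]
  set u : Fin N → ℝ := (N : ℝ)⁻¹ • ones with hudef
  have huones : u ⬝ᵥ ones = 1 := by
    simp [hudef, honesdef, dotProduct]
    field_simp
  have huMc : u ⬝ᵥ M *ᵥ c = t⁻¹ := by
    rw [hMc, dotProduct_smul, smul_eq_mul, huones, mul_one]
  have hcMu : c ⬝ᵥ M *ᵥ u = t⁻¹ := by rw [swap c u, huMc]
  have key : t⁻¹ ≤ u ⬝ᵥ M *ᵥ u := by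
    have h0 : 0 ≤ (u - c) ⬝ᵥ M *ᵥ (u - c) := by
      rw [quad]
      exact add_nonneg (dot_self_nonneg _) (mul_nonneg hs.le (dot_self_nonneg _))
    have hexp : (u - c) ⬝ᵥ M *ᵥ (u - c) = u ⬝ᵥ M *ᵥ u - t⁻¹ := by
      rw [Matrix.mulVec_sub, dotProduct_sub, sub_dotProduct,
        sub_dotProduct, huMc, hcMu, hcMc]
      ring
    linarith
  have honesones : ones ⬝ᵥ ones = (N : ℝ) := by simp [honesdef, dotProduct]
  have hRones : (R *ᵥ ones) ⬝ᵥ (R *ᵥ ones) ≤ specNorm R ^ 2 * N := by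
    have h1 := mulVec_vecNorm_le R ones
    have h2 : vecNorm (R *ᵥ ones) ^ 2 ≤ (specNorm R * vecNorm ones) ^ 2 :=
      pow_le_pow_left₀ (vecNorm_nonneg _) h1 2
    rw [vecNorm_sq, mul_pow, vecNorm_sq, honesones] at h2
    exact h2
  have huMu : u ⬝ᵥ M *ᵥ u ≤ (N : ℝ)⁻¹ * (specNorm R ^ 2 * (1 + lam)) := by
    have hMu : M *ᵥ u = (N : ℝ)⁻¹ • (M *ᵥ ones) := by rw [hudef, Matrix.mulVec_smul]
    have : u ⬝ᵥ M *ᵥ u = (N : ℝ)⁻¹ * ((N : ℝ)⁻¹ * (ones ⬝ᵥ M *ᵥ ones)) := by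
      rw [hMu, dotProduct_smul, hudef, smul_dotProduct]
      simp [mul_assoc]
    rw [this, quad ones, honesones]
    have hNinv : (0 : ℝ) < (N : ℝ)⁻¹ := by positivity
    have hbound : (R *ᵥ ones) ⬝ᵥ (R *ᵥ ones) + s * (N : ℝ)
        ≤ specNorm R ^ 2 * N * (1 + lam) := by
      rw [hsdef]; nlinarith [hRones, hK, hNR]
    calc (N:ℝ)⁻¹ * ((N:ℝ)⁻¹ * ((R *ᵥ ones) ⬝ᵥ (R *ᵥ ones) + s * (N : ℝ)))
        ≤ (N:ℝ)⁻¹ * ((N:ℝ)⁻¹ * (specNorm R ^ 2 * N * (1 + lam))) := by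
          apply mul_le_mul_of_nonneg_left (mul_le_mul_of_nonneg_left hbound hNinv.le) hNinv.le
      _ = (N : ℝ)⁻¹ * (specNorm R ^ 2 * (1 + lam)) := by field_simp
  have hscc : s * (c ⬝ᵥ c) ≤ (N : ℝ)⁻¹ * (specNorm R ^ 2 * (1 + lam)) := by
    have := quad c
    have h1 : s * (c ⬝ᵥ c) ≤ c ⬝ᵥ M *ᵥ c := by
      rw [this]; linarith [dot_self_nonneg (R *ᵥ c)]
    calc s * (c ⬝ᵥ c) ≤ c ⬝ᵥ M *ᵥ c := h1
      _ = t⁻¹ := hcMc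
      _ ≤ u ⬝ᵥ M *ᵥ u := key
      _ ≤ _ := huMu
  have hcc : c ⬝ᵥ c ≤ (N : ℝ)⁻¹ * (1 + 1 / lam) := by
    rw [hsdef] at hscc
    have h2 : lam * (c ⬝ᵥ c) ≤ (N : ℝ)⁻¹ * (1 + lam) := by
      have h3 := hscc
      rw [show lam * specNorm R ^ 2 * (c ⬝ᵥ c) = lam * (c ⬝ᵥ c) * specNorm R ^ 2 by ring,
        show (N : ℝ)⁻¹ * (specNorm R ^ 2 * (1 + lam)) = (N : ℝ)⁻¹ * (1 + lam) * specNorm R ^ 2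
          by ring] at h3
      exact le_of_mul_le_mul_right h3 hK
    have : c ⬝ᵥ c ≤ (N : ℝ)⁻¹ * (1 + lam) / lam := by
      rw [le_div_iff₀ hlam]; linarith
    calc c ⬝ᵥ c ≤ (N : ℝ)⁻¹ * (1 + lam) / lam := this
      _ = (N : ℝ)⁻¹ * (1 + 1 / lam) := by field_simp; ring
  rw [vecNorm_eq_sqrt_dot]
  calc Real.sqrt (c ⬝ᵥ c) ≤ Real.sqrt ((N : ℝ)⁻¹ * (1 + 1 / lam)) :=
        Real.sqrt_le_sqrt hcc
    _ = (1 / Real.sqrt N) * Real.sqrt (1 + 1 / lam) := by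
        rw [Real.sqrt_mul (by positivity), Real.sqrt_inv]; ring
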